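/- For any real number α that is not an integer multiple of 2π, and any real s, there exists a natural number k ≥ 1 such that cos(kα) + s·sin(kα) ≤ 0. -/

import Mathlib

open Real

lemma key_lemma (β φ : ℝ) (hβ0 : 0 < β) (hβπ : β ≤ π) :
    ∃ k : ℕ, 1 ≤ k ∧ Real.cos (k * β - φ) ≤ 0 := by
  have hπ := Real.pi_pos
  obtain ⟨n, hn⟩ := exists_nat_gt ((-φ - π / 2) / (2 * π))
  have hn' : -φ - π / 2 < n * (2 * π) := by
    rwa [div_lt_iff₀ (by positivity)] at hn
  set a := φ + π / 2 + n * (2 * π) with ha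
  have ha0 : 0 < a := by dsimp [a]; linarith
  set k := ⌈a / β⌉₊ with hk
  have hk1 : 1 ≤ k := Nat.ceil_pos.2 (by positivity)
  have hka : a ≤ k * β := by
    have h := Nat.le_ceil (a / β)
    calc a = (a / β) * β := by field_simp
    _ ≤ k * β := by apply mul_le_mul_of_nonneg_right h hβ0.le
  have hkb : (k : ℝ) * β < a + π := by
    have h1 : (k : ℝ) < a / β + 1 := Nat.ceil_lt_add_one (by positivity)
    have h2 : (k : ℝ) * β < (a / β + 1) * β := by
      apply mul_lt_mul_of_pos_right h1 hβ0
    have h3 : (a / β + 1) * β = a + β := by field_simp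
    rw [h3] at h2
    linarith
  refine ⟨k, hk1, ?_⟩
  have heq := Real.cos_add_int_mul_two_pi ((k:ℝ) * β - φ - n * (2 * π)) (n : ℤ)
  push_cast at heq
  rw [show (k:ℝ) * β - φ - n * (2*π) + n * (2*π) = k * β - φ by ring] at heq
  rw [heq]
  apply Real.cos_nonpos_of_pi_div_two_le_of_le
  · dsimp [a] at hka; linarith
  · dsimp [a] at hkb; linarith

theorem stmt_3 (α : ℝ) (hnz : ¬ ∃ m : ℤ, α = m * (2 * π)) (s : ℝ) :
    ∃ k : ℕ, 1 ≤ k ∧ Real.cos (k * α) + s * Real.sin (k * α) ≤ 0 := by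
  have hπ := Real.pi_pos
  set r := Real.sqrt (1 + s ^ 2) with hrdef
  have hr : 0 < r := Real.sqrt_pos.2 (by positivity)
  have hr2 : r ^ 2 = 1 + s ^ 2 := Real.sq_sqrt (by positivity)
  set φ := Real.arcsin (s / r) with hφdef
  have hsφ : Real.sin φ = s / r := by
    apply Real.sin_arcsin
    · rw [neg_le, ← neg_div]
      rw [div_le_one hr]
      nlinarith [Real.sq_sqrt (show (0:ℝ) ≤ 1 + s^2 by positivity), abs_nonneg s]
    · rw [div_le_one hr]; nlinarith
  have hcφ : Real.cos φ = 1 / r := by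
    rw [hφdef, Real.cos_arcsin]
    have : 1 - (s / r) ^ 2 = (1 / r) ^ 2 := by
      field_simp
      nlinarith
    rw [this, Real.sqrt_sq (by positivity)]
  -- reduce to cos (k*α - φ) ≤ 0
  have hmain : ∀ x : ℝ, Real.cos x + s * Real.sin x = r * Real.cos (x - φ) := by
    intro x
    rw [Real.cos_sub, hcφ, hsφ]
    field_simp
  -- fractional part setup
  set t := Int.fract (α / (2 * π)) with htdef
  set m := ⌊α / (2 * π)⌋ with hmdef
  have hαeq : α = m * (2 * π) + t * (2 * π) := by
    have := Int.fract_add_floor (α / (2 * π))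
    have h2 : (t + m) * (2 * π) = α := by
      rw [this]; field_simp
    linarith [h2]
  have ht0 : 0 < t := by
    rcases lt_or_eq_of_le (Int.fract_nonneg (α / (2 * π))) with h | h
    · exact h
    · exfalso; apply hnz
      rw [← htdef] at h
      exact ⟨m, by rw [hαeq, ← h]; ring⟩
  have ht1 : t < 1 := Int.fract_lt_one _
  set β := t * (2 * π) with hβdef
  have hβ0 : 0 < β := by positivity
  have hβ2π : β < 2 * π := by
    have := mul_lt_mul_of_pos_right ht1 (show (0:ℝ) < 2 * π by positivity)
    simpa using this
  -- cos (k α - φ) = cos (k β - φ)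
  have hper : ∀ k : ℕ, Real.cos (k * α - φ) = Real.cos (k * β - φ) := by
    intro k
    rw [show (k:ℝ) * α - φ = (k * β - φ) + (k * m) * (2 * π) by rw [hαeq]; push_cast; ring]
    exact_mod_cast Real.cos_add_int_mul_two_pi (k * β - φ) (k * m)
  have hred : ∃ k : ℕ, 1 ≤ k ∧ Real.cos (k * β - φ) ≤ 0 := by
    rcases le_or_gt β π with hle | hgt
    · exact key_lemma β φ hβ0 hle
    · obtain ⟨k, hk1, hk⟩ := key_lemma (2 * π - β) (-φ) (by linarith) (by linarith)
      refine ⟨k, hk1, ?_⟩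
      have : Real.cos (k * (2 * π - β) - -φ) = Real.cos (k * β - φ) := by
        rw [show (k:ℝ) * (2 * π - β) - -φ = -(k * β - φ) + k * (2 * π) by ring]
        rw [show ((k:ℝ)) * (2*π) = ((k:ℤ):ℝ) * (2*π) by push_cast; ring]
        rw [Real.cos_add_int_mul_two_pi, Real.cos_neg]
      rwa [this] at hk
  obtain ⟨k, hk1, hk⟩ := hred
  refine ⟨k, hk1, ?_⟩
  rw [hmain]
  have := (hper k).symm ▸ hk
  rw [hper k]
  exact mul_nonpos_of_nonneg_of_nonpos hr.le hk
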